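/- Let r(1), r(2) > 0 and let V : ℓ²(r(1)ℤ) → ℓ²(r(2)ℤ) be a bounded operator that is uniform with respect to the diagonal position operators D_{r(1)} and D_{r(2)} (i.e., k ↦ e^{ikD_{r(2)}} V e^{-ikD_{r(1)}} is norm continuous). For y ∈ r(1)ℕ define the measure p_y = Σ_{x ∈ r(2)ℤ} |⟨Vδ_y, δ_x⟩|² δ_{x/y} on ℝ. Then for every δ > 0, lim_{y→∞} p_y((−∞, 1−δ] ∪ [1+δ, ∞)) = 0. -/

import Mathlib

open scoped InnerProductSpace
open Filter

lemma hasSum_norm_inner_sq {E : Type*} [NormedAddCommGroup E] [InnerProductSpace ℂ E]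
    (b : HilbertBasis ℤ ℂ E) (w : E) :
    HasSum (fun i : ℤ => ‖⟪b i, w⟫_ℂ‖ ^ 2) (‖w‖ ^ 2) := by
  have h := b.hasSum_inner_mul_inner w w
  rw [inner_self_eq_norm_sq_to_K] at h
  have heq : ∀ i : ℤ, ⟪w, b i⟫_ℂ * ⟪b i, w⟫_ℂ = ((‖⟪b i, w⟫_ℂ‖ ^ 2 : ℝ) : ℂ) := by
    intro i
    rw [← inner_conj_symm w (b i), mul_comm, Complex.mul_conj, Complex.normSq_eq_norm_sq,
      norm_inner_symm]
  simp only [heq] at h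
  norm_cast at h
  exact Complex.hasSum_ofReal.mp h

lemma norm_exp_I_sub_one_sq (t : ℝ) :
    ‖Complex.exp (Complex.I * t) - 1‖ ^ 2 = 2 - 2 * Real.cos t := by
  rw [mul_comm, Complex.exp_mul_I]
  rw [← Complex.ofReal_cos, ← Complex.ofReal_sin]
  rw [Complex.sq_norm, Complex.normSq_apply]
  simp only [Complex.add_re, Complex.add_im, Complex.sub_re, Complex.sub_im,
    Complex.mul_re, Complex.mul_im, Complex.ofReal_re, Complex.ofReal_im,
    Complex.I_re, Complex.I_im, Complex.one_re, Complex.one_im]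
  nlinarith [Real.sin_sq_add_cos_sq t]

lemma integral_two_sub_cos {θ : ℝ} (k₀ : ℝ) (hθ : θ ≠ 0) :
    ∫ k in (0:ℝ)..k₀, (2 - 2 * Real.cos (k * θ)) = 2 * k₀ - 2 * (Real.sin (k₀ * θ) / θ) := by
  have hint : IntervalIntegrable (fun k => Real.cos (k * θ)) MeasureTheory.volume 0 k₀ :=
    (Real.continuous_cos.comp (continuous_id.mul continuous_const)).intervalIntegrable _ _
  have h1 : ∫ k in (0:ℝ)..k₀, Real.cos (k * θ) = Real.sin (k₀ * θ) / θ := by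
    rw [intervalIntegral.integral_comp_mul_right Real.cos hθ]
    simp [integral_cos]
    ring
  rw [intervalIntegral.integral_sub intervalIntegrable_const (hint.const_mul 2),
    intervalIntegral.integral_const_mul, h1, intervalIntegral.integral_const]
  simp
  ring

lemma integral_two_sub_cos_lb {θ : ℝ} {k₀ : ℝ} (hk₀ : 0 < k₀) (hθ : 2 / k₀ ≤ |θ|) :
    k₀ ≤ ∫ k in (0:ℝ)..k₀, (2 - 2 * Real.cos (k * θ)) := by
  have hθpos : 0 < |θ| := lt_of_lt_of_le (by positivity) hθ
  have hθ0 : θ ≠ 0 := fun h => by simp [h] at hθpos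
  rw [integral_two_sub_cos k₀ hθ0]
  have h1 : |Real.sin (k₀ * θ) / θ| ≤ 1 / |θ| := by
    rw [abs_div]
    gcongr
    exact Real.abs_sin_le_one _
  have h2 : 1 / |θ| ≤ k₀ / 2 := by
    rw [div_le_div_iff₀ hθpos two_pos]
    rw [div_le_iff₀ hk₀] at hθ
    nlinarith
  have h3 := abs_le.mp h1
  linarith [h2, h3.2, h3.1]

theorem transition_probability_concentrates
    {H1 H2 : Type*} [NormedAddCommGroup H1] [InnerProductSpace ℂ H1] [CompleteSpace H1]
    [NormedAddCommGroup H2] [InnerProductSpace ℂ H2] [CompleteSpace H2]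
    (r1 r2 : ℝ) (hr1 : 0 < r1) (hr2 : 0 < r2)
    (e1 : HilbertBasis ℤ ℂ H1) (e2 : HilbertBasis ℤ ℂ H2)
    (V : H1 →L[ℂ] H2)
    (T : ℝ → (H1 →L[ℂ] H2))
    (hT0 : T 0 = V)
    (hTcont : Continuous T)
    (hTmat : ∀ (k : ℝ) (x y : ℤ),
      ⟪e2 x, T k (e1 y)⟫_ℂ =
        Complex.exp (Complex.I * k * ((r2 * x : ℝ) - (r1 * y : ℝ))) * ⟪e2 x, V (e1 y)⟫_ℂ)
    (δ : ℝ) (hδ : 0 < δ) :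
    Tendsto (fun y : ℕ =>
        ∑' x : {x : ℤ // δ ≤ |(r2 * x) / (r1 * y) - 1|},
          ‖⟪e2 (x : ℤ), V (e1 (y : ℤ))⟫_ℂ‖ ^ 2)
      atTop (nhds 0) := by
  rw [Metric.tendsto_atTop]
  intro ε hε
  -- continuity at 0 gives a small window
  have hc := Metric.continuousAt_iff.mp (hTcont.continuousAt (x := (0:ℝ)))
  obtain ⟨k₁, hk₁pos, hk₁⟩ := hc (Real.sqrt (ε/2)) (by positivity)
  set k₀ := k₁ / 2 with hk₀def
  have hk₀pos : 0 < k₀ := by positivity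
  have hTbound : ∀ k ∈ Set.Icc (0:ℝ) k₀, ‖T k - V‖^2 ≤ ε/2 := by
    intro k hk
    have hd : dist k 0 < k₁ := by
      rw [Real.dist_eq, sub_zero, abs_of_nonneg hk.1]; linarith [hk.2]
    have h1 := hk₁ hd
    rw [hT0, dist_eq_norm] at h1
    have h2 : ‖T k - V‖^2 < Real.sqrt (ε/2) ^ 2 :=
      pow_lt_pow_left₀ h1 (norm_nonneg _) two_ne_zero
    rw [Real.sq_sqrt (by positivity)] at h2
    linarith
  obtain ⟨M, hM⟩ := exists_nat_ge ((2 / k₀) / (δ * r1))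
  refine ⟨M + 1, fun y hy => ?_⟩
  have hy1 : 1 ≤ y := le_trans (Nat.le_add_left 1 M) hy
  have hypos : (0:ℝ) < y := by exact_mod_cast hy1
  have hyR : ((2/k₀) / (δ * r1)) ≤ (y:ℝ) :=
    hM.trans (by exact_mod_cast le_trans (Nat.le_succ M) hy)
  have hθy : 2 / k₀ ≤ δ * (r1 * y) := by
    rw [div_le_iff₀ (by positivity : (0:ℝ) < δ * r1)] at hyR
    calc 2 / k₀ ≤ (y:ℝ) * (δ * r1) := hyR
    _ = δ * (r1 * y) := by ring
  -- setup
  have hsum := hasSum_norm_inner_sq e2 (V (e1 (y:ℤ)))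
  have hsub : Summable (fun x : {x : ℤ // δ ≤ |(r2 * x) / (r1 * y) - 1|} =>
      ‖⟪e2 (x:ℤ), V (e1 (y:ℤ))⟫_ℂ‖ ^ 2) := hsum.summable.subtype _
  rw [Real.dist_eq, sub_zero, abs_of_nonneg (tsum_nonneg fun x => by positivity)]
  have key : (∑' x : {x : ℤ // δ ≤ |(r2 * x) / (r1 * y) - 1|},
      ‖⟪e2 (x:ℤ), V (e1 (y:ℤ))⟫_ℂ‖ ^ 2) ≤ ε/2 := by
    apply Summable.tsum_le_of_sum_le hsub
    intro s
    have hθ : ∀ x : {x : ℤ // δ ≤ |(r2 * x) / (r1 * y) - 1|},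
        2 / k₀ ≤ |r2 * (x:ℤ) - r1 * y| := by
      intro x
      have hx := x.2
      have hr1y : (0:ℝ) < r1 * y := by positivity
      have heq : (r2 * (x:ℤ)) / (r1 * y) - 1 = (r2 * (x:ℤ) - r1 * y) / (r1 * y) := by
        field_simp
      rw [heq, abs_div, abs_of_pos hr1y, le_div_iff₀ hr1y] at hx
      calc 2 / k₀ ≤ δ * (r1 * y) := hθy
      _ ≤ |r2 * (x:ℤ) - r1 * y| := hx
    have main : k₀ * ∑ x ∈ s, ‖⟪e2 (x:ℤ), V (e1 (y:ℤ))⟫_ℂ‖ ^ 2 ≤ k₀ * (ε/2) := by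
      calc k₀ * ∑ x ∈ s, ‖⟪e2 (x:ℤ), V (e1 (y:ℤ))⟫_ℂ‖ ^ 2
          = ∑ x ∈ s, k₀ * ‖⟪e2 (x:ℤ), V (e1 (y:ℤ))⟫_ℂ‖ ^ 2 := Finset.mul_sum _ _ _
        _ ≤ ∑ x ∈ s, ∫ k in (0:ℝ)..k₀,
              (2 - 2 * Real.cos (k * (r2 * (x:ℤ) - r1 * y))) *
                ‖⟪e2 (x:ℤ), V (e1 (y:ℤ))⟫_ℂ‖ ^ 2 := by
            apply Finset.sum_le_sum
            intro x _
            rw [intervalIntegral.integral_mul_const]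
            exact mul_le_mul_of_nonneg_right (integral_two_sub_cos_lb hk₀pos (hθ x))
              (by positivity)
        _ = ∫ k in (0:ℝ)..k₀, ∑ x ∈ s,
              (2 - 2 * Real.cos (k * (r2 * (x:ℤ) - r1 * y))) *
                ‖⟪e2 (x:ℤ), V (e1 (y:ℤ))⟫_ℂ‖ ^ 2 := by
            rw [intervalIntegral.integral_finset_sum]
            intro x _
            exact (Continuous.intervalIntegrable (by fun_prop) _ _)
        _ ≤ ∫ _k in (0:ℝ)..k₀, (ε/2) := by
            apply intervalIntegral.integral_mono_on (le_of_lt hk₀pos)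
            · exact Continuous.intervalIntegrable (by fun_prop) _ _
            · exact intervalIntegrable_const
            · intro k hk
              have hterm : ∀ x : ℤ,
                  (2 - 2 * Real.cos (k * (r2 * x - r1 * y))) *
                    ‖⟪e2 x, V (e1 (y:ℤ))⟫_ℂ‖ ^ 2
                  = ‖⟪e2 x, (T k - V) (e1 (y:ℤ))⟫_ℂ‖ ^ 2 := by
                intro x
                rw [ContinuousLinearMap.sub_apply, inner_sub_right, hTmat]
                have he : Complex.I * (k:ℂ) * (((r2 * (x:ℤ) : ℝ) : ℂ) - ((r1 * ((y:ℕ):ℤ) : ℝ) : ℂ))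
                    = Complex.I * ((k * (r2 * (x:ℤ) - r1 * (y:ℕ)) : ℝ) : ℂ) := by
                  push_cast
                  ring
                rw [he, show Complex.exp (Complex.I * ((k * (r2 * (x:ℤ) - r1 * (y:ℕ)) : ℝ) : ℂ)) *
                      ⟪e2 x, V (e1 (y:ℤ))⟫_ℂ - ⟪e2 x, V (e1 (y:ℤ))⟫_ℂ
                    = (Complex.exp (Complex.I * ((k * (r2 * (x:ℤ) - r1 * (y:ℕ)) : ℝ) : ℂ)) - 1) *
                      ⟪e2 x, V (e1 (y:ℤ))⟫_ℂ by ring,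
                  norm_mul, mul_pow, norm_exp_I_sub_one_sq]
              simp only [hterm]
              have hsum2 := hasSum_norm_inner_sq e2 ((T k - V) (e1 (y:ℤ)))
              have hmap : ∑ x ∈ s, ‖⟪e2 (x:ℤ), (T k - V) (e1 (y:ℤ))⟫_ℂ‖ ^ 2
                  = ∑ x ∈ s.map ⟨Subtype.val, Subtype.val_injective⟩,
                      ‖⟪e2 x, (T k - V) (e1 (y:ℤ))⟫_ℂ‖ ^ 2 :=
                (Finset.sum_map s ⟨Subtype.val, Subtype.val_injective⟩
                  fun x => ‖⟪e2 x, (T k - V) (e1 (y:ℤ))⟫_ℂ‖ ^ 2).symm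
              rw [hmap]
              have h1 : ∑ x ∈ s.map ⟨Subtype.val, Subtype.val_injective⟩,
                  ‖⟪e2 x, (T k - V) (e1 (y:ℤ))⟫_ℂ‖ ^ 2 ≤ ‖(T k - V) (e1 (y:ℤ))‖ ^ 2 :=
                sum_le_hasSum _ (fun _ _ => by positivity) hsum2
              have h2 : ‖(T k - V) (e1 (y:ℤ))‖ ^ 2 ≤ ‖T k - V‖ ^ 2 := by
                have := (T k - V).le_opNorm (e1 (y:ℤ))
                rw [e1.orthonormal.1 (y:ℤ), mul_one] at this
                exact pow_le_pow_left₀ (norm_nonneg _) this 2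
              exact le_trans h1 (le_trans h2 (hTbound k hk))
        _ = k₀ * (ε/2) := by
            rw [intervalIntegral.integral_const, sub_zero, smul_eq_mul]
    have := le_of_mul_le_mul_left main hk₀pos
    exact this
  linarith
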